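/- Let α, ε > 0. Then there exists d₀ such that for all d ≥ d₀ the inclusion {z ∈ (0,1)^d : H(z) ≥ 1 − α + ε} ⊆ [0,1]^d_α holds; equivalently, for every z in the open cube (0,1)^d with H(z) ≥ 1 − α + ε and every closed affine halfspace U ⊆ ℝ^d containing z, one has |U ∩ {0,1}^d| ≥ 2^{(1−α)d}. -/

import Mathlib

open Filter
open scoped BigOperators

/-- The binary entropy function `h(ξ) = ξ log₂(1/ξ) + (1-ξ) log₂(1/(1-ξ))`. -/
noncomputable def binEnt (x : ℝ) : ℝ :=
  x * Real.logb 2 x⁻¹ + (1 - x) * Real.logb 2 (1 - x)⁻¹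

/-- The 0/1-point of `ℝ^d` associated to a Boolean vector. -/
def bv {d : ℕ} (x : Fin d → Bool) : Fin d → ℝ := fun i => if x i then 1 else 0

namespace S8

lemma binEnt_eq (x : ℝ) : binEnt x = Real.binEntropy x / Real.log 2 := by
  simp only [binEnt, Real.binEntropy, Real.logb, add_div, mul_div_assoc]

lemma binEnt_le_one (x : ℝ) : binEnt x ≤ 1 := by
  rw [binEnt_eq, div_le_one (Real.log_pos one_lt_two)]
  exact Real.binEntropy_le_log_two

lemma binEnt_nonneg {x : ℝ} (h0 : 0 ≤ x) (h1 : x ≤ 1) : 0 ≤ binEnt x := by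
  rw [binEnt_eq]
  exact div_nonneg (Real.binEntropy_nonneg h0 h1) (Real.log_nonneg one_le_two)

lemma binEnt_zero : binEnt 0 = 0 := by simp [binEnt_eq]
lemma binEnt_one : binEnt 1 = 0 := by simp [binEnt_eq]

lemma binEnt_continuous : Continuous binEnt := by
  have : binEnt = fun x => Real.binEntropy x / Real.log 2 := funext binEnt_eq
  rw [this]; exact Real.binEntropy_continuous.div_const _

lemma binEnt_concave : ConcaveOn ℝ (Set.Icc (0:ℝ) 1) binEnt := by
  have : binEnt = fun x => (Real.log 2)⁻¹ • Real.binEntropy x := by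
    funext x; rw [binEnt_eq]; simp [smul_eq_mul, div_eq_inv_mul]
  rw [this]
  exact (Real.strictConcave_binEntropy.concaveOn).smul (by positivity)

lemma exists_delta (ε : ℝ) (hε : 0 < ε) :
    ∃ δ : ℝ, 0 < δ ∧ δ ≤ 1/4 ∧
      ∀ t : ℝ, 0 ≤ t → t ≤ 1 → (t < δ ∨ 1 - δ < t) → binEnt t ≤ ε := by
  have h0 := Metric.continuousAt_iff.1 (binEnt_continuous.continuousAt (x := 0))
  have h1 := Metric.continuousAt_iff.1 (binEnt_continuous.continuousAt (x := 1))
  obtain ⟨δ₁, hδ₁0, hδ₁⟩ := h0 ε hε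
  obtain ⟨δ₂, hδ₂0, hδ₂⟩ := h1 ε hε
  refine ⟨min (min δ₁ δ₂) (1/4), by positivity, min_le_right _ _, ?_⟩
  intro t ht0 ht1 ht
  rcases ht with ht | ht
  · have : dist t 0 < δ₁ := by
      rw [Real.dist_eq, sub_zero, abs_of_nonneg ht0]
      calc t < min (min δ₁ δ₂) (1/4) := ht
        _ ≤ δ₁ := le_trans (min_le_left _ _) (min_le_left _ _)
    have := hδ₁ this
    rw [Real.dist_eq, binEnt_zero, sub_zero] at this
    calc binEnt t ≤ |binEnt t| := le_abs_self _
      _ ≤ ε := le_of_lt this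
  · have : dist t 1 < δ₂ := by
      rw [Real.dist_eq, abs_of_nonpos (by linarith)]
      have hm : min (min δ₁ δ₂) (1/4) ≤ δ₂ := le_trans (min_le_left _ _) (min_le_right _ _)
      linarith
    have := hδ₂ this
    rw [Real.dist_eq, binEnt_one, sub_zero] at this
    calc binEnt t ≤ |binEnt t| := le_abs_self _
      _ ≤ ε := le_of_lt this

/-- Bernoulli weight on Bool. -/
def br (p : ℝ) : Bool → ℝ := fun b => if b then p else 1 - p

/-- Product measure on the Boolean cube. -/
def mea {d : ℕ} (w : Fin d → ℝ) (x : Fin d → Bool) : ℝ := ∏ i, br (w i) (x i)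

variable {d : ℕ}

lemma br_nonneg {p : ℝ} (h0 : 0 ≤ p) (h1 : p ≤ 1) (b : Bool) : 0 ≤ br p b := by
  cases b <;> simp [br] <;> linarith

lemma mea_nonneg {w : Fin d → ℝ} (h0 : ∀ i, 0 ≤ w i) (h1 : ∀ i, w i ≤ 1) (x : Fin d → Bool) :
    0 ≤ mea w x :=
  Finset.prod_nonneg fun i _ => br_nonneg (h0 i) (h1 i) _

lemma sum_prod_bool' (g : Fin d → Bool → ℝ) :
    ∑ x : Fin d → Bool, ∏ i, g i (x i) = ∏ i, (g i false + g i true) := by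
  rw [← Fintype.prod_sum]
  exact Finset.prod_congr rfl fun i _ => by rw [Fintype.sum_bool]; ring

lemma sum_mea (w : Fin d → ℝ) : ∑ x, mea w x = 1 := by
  rw [show (fun x => mea w x) = fun x => ∏ i, br (w i) (x i) from rfl]
  rw [sum_prod_bool']
  simp [br]

lemma expect_single (w : Fin d → ℝ) (j : Fin d) (φ : Bool → ℝ) :
    ∑ x, mea w x * φ (x j) = (1 - w j) * φ false + w j * φ true := by
  have h : ∀ x : Fin d → Bool, mea w x * φ (x j)
      = ∏ i, (br (w i) (x i) * (if i = j then φ (x i) else 1)) := by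
    intro x
    rw [Finset.prod_mul_distrib, Finset.prod_ite_eq']
    simp [mea, mul_comm]
  rw [Finset.sum_congr rfl fun x _ => h x,
    sum_prod_bool' (fun i b => br (w i) b * (if i = j then φ b else 1))]
  rw [Finset.prod_eq_single j]
  · simp [br]; try ring
  · intro i _ hij; simp [br, hij]
  · simp

lemma expect_pair (w : Fin d → ℝ) {j k : Fin d} (hjk : j ≠ k) (φ ψ : Bool → ℝ) :
    ∑ x, mea w x * (φ (x j) * ψ (x k))
      = ((1 - w j) * φ false + w j * φ true) * ((1 - w k) * ψ false + w k * ψ true) := by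
  have h : ∀ x : Fin d → Bool, mea w x * (φ (x j) * ψ (x k))
      = ∏ i, (br (w i) (x i) * (if i = j then φ (x i) else 1) * (if i = k then ψ (x i) else 1)) := by
    intro x
    rw [Finset.prod_mul_distrib, Finset.prod_mul_distrib, Finset.prod_ite_eq', Finset.prod_ite_eq']
    simp [mea]; ring
  rw [Finset.sum_congr rfl fun x _ => h x,
    sum_prod_bool' (fun i b => br (w i) b * (if i = j then φ b else 1) * (if i = k then ψ b else 1))]
  rw [← Finset.prod_subset (Finset.subset_univ ({j, k} : Finset (Fin d)))
      (by intro i _ hi; simp at hi; simp [br, hi.1, hi.2])]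
  rw [Finset.prod_pair hjk]
  have hkj : k ≠ j := hjk.symm
  simp [br, hjk, hkj]
  try ring

lemma var_sum (w : Fin d → ℝ) (φ : Fin d → Bool → ℝ)
    (hmean : ∀ i, (1 - w i) * φ i false + w i * φ i true = 0) :
    ∑ x, mea w x * (∑ i, φ i (x i)) ^ 2
      = ∑ i, ((1 - w i) * (φ i false) ^ 2 + w i * (φ i true) ^ 2) := by
  have expand : ∀ x : Fin d → Bool,
      mea w x * (∑ i, φ i (x i)) ^ 2 = ∑ i, ∑ k, mea w x * (φ i (x i) * φ k (x k)) := by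
    intro x
    rw [sq, Finset.sum_mul_sum]
    rw [Finset.mul_sum]
    exact Finset.sum_congr rfl fun i _ => by rw [Finset.mul_sum]
  rw [Finset.sum_congr rfl fun x _ => expand x]
  rw [Finset.sum_comm]
  refine Finset.sum_congr rfl fun i _ => ?_
  rw [Finset.sum_comm]
  rw [Finset.sum_eq_single i]
  · have e := expect_single w i (fun b => φ i b * φ i b)
    rw [show (∑ x : Fin d → Bool, mea w x * (φ i (x i) * φ i (x i)))
        = ∑ x : Fin d → Bool, mea w x * ((fun b => φ i b * φ i b) (x i)) from rfl, e]
    ring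
  · intro k _ hki
    have e := expect_pair w (Ne.symm hki) (φ i) (φ k)
    rw [show (∑ x : Fin d → Bool, mea w x * (φ i (x i) * φ k (x k)))
        = ∑ x : Fin d → Bool, mea w x * ((φ i) (x i) * (φ k) (x k)) from rfl, e, hmean i,
      zero_mul]
  · simp

lemma cheb {X : Type*} [Fintype X] (μ F : X → ℝ) (hμ : ∀ x, 0 ≤ μ x)
    (g Q k : ℝ) (hg : 0 ≤ g) (hk : 0 < k) (hQ : ∑ x, μ x * F x ^ 2 ≤ Q) (hkQ : k * Q ≤ g ^ 2)
    (bad : Finset X) (hbad : ∀ x ∈ bad, g < F x) :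
    ∑ x ∈ bad, μ x ≤ 1 / k := by
  have hterm : ∀ x ∈ bad, g ^ 2 * μ x ≤ μ x * F x ^ 2 := by
    intro x hx
    have h1 := hbad x hx
    have : g ^ 2 ≤ F x ^ 2 := by nlinarith
    nlinarith [hμ x]
  have hsub : ∑ x ∈ bad, μ x * F x ^ 2 ≤ ∑ x, μ x * F x ^ 2 :=
    Finset.sum_le_sum_of_subset_of_nonneg (Finset.subset_univ _)
      (fun x _ _ => mul_nonneg (hμ x) (sq_nonneg _))
  have h1 : g ^ 2 * ∑ x ∈ bad, μ x ≤ Q := by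
    rw [Finset.mul_sum]
    exact le_trans (Finset.sum_le_sum hterm) (le_trans hsub hQ)
  rcases eq_or_lt_of_le hg with hg0 | hgpos
  · have hQ0 : Q ≤ 0 := by nlinarith
    have hzero : ∀ x ∈ (Finset.univ : Finset X), μ x * F x ^ 2 = 0 := by
      have := (Finset.sum_eq_zero_iff_of_nonneg
        (fun x _ => mul_nonneg (hμ x) (sq_nonneg (F x)))).1
        (le_antisymm (le_trans hQ hQ0)
          (Finset.sum_nonneg fun x _ => mul_nonneg (hμ x) (sq_nonneg _)))
      exact this
    have : ∑ x ∈ bad, μ x = 0 := by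
      apply Finset.sum_eq_zero
      intro x hx
      have hF : 0 < F x := hg0 ▸ hbad x hx
      have := hzero x (Finset.mem_univ x)
      have hF2 : F x ^ 2 ≠ 0 := by positivity
      exact (mul_eq_zero.1 this).resolve_right hF2
    rw [this]; positivity
  · have hgg : 0 < g ^ 2 := by positivity
    have h2 : ∑ x ∈ bad, μ x ≤ Q / g ^ 2 := by rw [le_div_iff₀ hgg]; linarith
    have h3 : Q / g ^ 2 ≤ 1 / k := by rw [div_le_div_iff₀ hgg hk]; nlinarith
    linarith

lemma sum_union_le {X : Type*} [DecidableEq X] (A B : Finset X) (μ : X → ℝ)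
    (hμ : ∀ x, 0 ≤ μ x) : ∑ x ∈ A ∪ B, μ x ≤ ∑ x ∈ A, μ x + ∑ x ∈ B, μ x := by
  have := Finset.sum_union_inter (s₁ := A) (s₂ := B) (f := μ)
  have h2 : 0 ≤ ∑ x ∈ A ∩ B, μ x := Finset.sum_nonneg fun x _ => hμ x
  linarith

lemma exists_top {ι : Type*} [DecidableEq ι] (wt : ι → ℝ) :
    ∀ (m : ℕ) (B : Finset ι), ∃ T, T ⊆ B ∧ T.card = min m B.card ∧
      ∀ i ∈ B, i ∉ T → ∀ j ∈ T, wt i ≤ wt j := by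
  intro m
  induction m with
  | zero => exact fun B => ⟨∅, Finset.empty_subset _, by simp, by simp⟩
  | succ m ih =>
    intro B
    rcases B.eq_empty_or_nonempty with rfl | hB
    · exact ⟨∅, Finset.empty_subset _, by simp, by simp⟩
    · obtain ⟨j, hj, hjmax⟩ := B.exists_max_image wt hB
      obtain ⟨T', hT'sub, hT'card, hT'prop⟩ := ih (B.erase j)
      have hjT' : j ∉ T' := fun h => (Finset.mem_erase.1 (hT'sub h)).1 rfl
      refine ⟨insert j T', ?_, ?_, ?_⟩
      · intro i hi
        rcases Finset.mem_insert.1 hi with rfl | hi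
        · exact hj
        · exact Finset.mem_of_mem_erase (hT'sub hi)
      · rw [Finset.card_insert_of_notMem hjT', hT'card, Finset.card_erase_of_mem hj]
        have : 1 ≤ B.card := Finset.card_pos.2 hB
        omega
      · intro i hi hiT jj hjj
        rcases Finset.mem_insert.1 hjj with rfl | hjj
        · exact hjmax i hi
        · have hinej : i ≠ j := fun h => hiT (h ▸ Finset.mem_insert_self _ _)
          exact hT'prop i (Finset.mem_erase.2 ⟨hinej, hi⟩)
            (fun h => hiT (Finset.mem_insert_of_mem h)) jj hjj

lemma mea_le_rpow (w : Fin d → ℝ) (h0 : ∀ i, 0 ≤ w i) (h1 : ∀ i, w i ≤ 1)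
    (x : Fin d → Bool) (β : ℝ) (hV : β ≤ ∑ i, Real.logb 2 (br (w i) (x i))⁻¹) :
    mea w x ≤ (2:ℝ) ^ (-β) := by
  have hbr0 : ∀ i, 0 ≤ br (w i) (x i) := by
    intro i; cases hx : x i <;> simp [br, hx] <;> [linarith [h1 i]; exact h0 i]
  by_cases hz : ∃ i, br (w i) (x i) = 0
  · obtain ⟨i, hi⟩ := hz
    have : mea w x = 0 := Finset.prod_eq_zero (Finset.mem_univ i) hi
    rw [this]
    positivity
  · push_neg at hz
    have hpos : ∀ i, 0 < br (w i) (x i) := fun i => lt_of_le_of_ne (hbr0 i) (Ne.symm (hz i))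
    have hμpos : 0 < mea w x := Finset.prod_pos fun i _ => hpos i
    have hlog : Real.logb 2 (mea w x) = ∑ i, Real.logb 2 (br (w i) (x i)) :=
      Real.logb_prod _ _ fun i _ => hz i
    have hVeq : (∑ i, Real.logb 2 (br (w i) (x i))⁻¹) = - Real.logb 2 (mea w x) := by
      rw [hlog, ← Finset.sum_neg_distrib]
      exact Finset.sum_congr rfl fun i _ => Real.logb_inv _ _
    have hle : Real.logb 2 (mea w x) ≤ -β := by rw [hVeq] at hV; linarith
    calc mea w x = (2:ℝ) ^ Real.logb 2 (mea w x) :=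
        (Real.rpow_logb two_pos (by norm_num) hμpos).symm
      _ ≤ (2:ℝ) ^ (-β) := Real.rpow_le_rpow_of_exponent_le one_le_two hle



set_option maxHeartbeats 16000000 in
lemma main_count (α ε : ℝ) (hε : 0 < ε) :
    ∃ d₀ : ℕ, 1 ≤ d₀ ∧ ∀ d : ℕ, d₀ ≤ d → ∀ z a : Fin d → ℝ, ∀ c : ℝ,
      (∀ i, z i ∈ Set.Ioo (0:ℝ) 1) →
      1 - α + ε ≤ (1 / (d : ℝ)) * ∑ i, binEnt (z i) →
      (∑ i, a i * z i) ≤ c →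
      (2:ℝ) ^ ((1 - α) * (d:ℝ)) ≤
        ((Finset.univ.filter
          (fun x : Fin d → Bool => (∑ i, a i * (if x i then (1:ℝ) else 0)) ≤ c)).card : ℝ) := by
  classical
  obtain ⟨δ, hδ0, hδ4, hδ⟩ := exists_delta (ε/4) (by positivity)
  set θ : ℝ := min (ε/8) (1/2) with hθdef
  have hθ0 : 0 < θ := lt_min (by positivity) (by norm_num)
  have hθhalf : θ ≤ 1/2 := min_le_right _ _
  have hθε : θ ≤ ε/8 := min_le_left _ _
  set L : ℝ := Real.logb 2 (2/δ) with hLdef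
  have hL1 : 1 ≤ L := by
    rw [hLdef, show (1:ℝ) = Real.logb 2 2 from (Real.logb_self_eq_one one_lt_two).symm]
    apply Real.logb_le_logb_of_le one_lt_two two_pos
    rw [le_div_iff₀ hδ0]; linarith
  have hL0 : 0 < L := lt_of_lt_of_le one_pos hL1
  set m : ℕ := max 1 ⌈1/(8*θ*δ^2)⌉₊ with hmdef
  have hm1 : 1 ≤ m := le_max_left _ _
  have hm0 : (0:ℝ) < m := by exact_mod_cast lt_of_lt_of_le one_pos (by exact_mod_cast hm1)
  have hmge : 1/(8*θ*δ^2) ≤ (m:ℝ) := by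
    calc 1/(8*θ*δ^2) ≤ (⌈1/(8*θ*δ^2)⌉₊ : ℝ) := Nat.le_ceil _
      _ ≤ (m:ℝ) := by exact_mod_cast Nat.le_max_right _ _
  set d₀ : ℕ := max ⌈(2*(m:ℝ)+4)/ε⌉₊ ⌈L^2/(ε/8)^2⌉₊ + 1 with hd₀def
  refine ⟨d₀, by omega, ?_⟩
  intro d hd z a c hz hH hc
  have hd1 : 1 ≤ d := by omega
  have hdpos : (0:ℝ) < d := by exact_mod_cast lt_of_lt_of_le one_pos (by exact_mod_cast hd1)
  have hdm : 2*(m:ℝ) + 4 ≤ ε * d := by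
    have h1 : (⌈(2*(m:ℝ)+4)/ε⌉₊ : ℝ) ≤ d := by
      have : ⌈(2*(m:ℝ)+4)/ε⌉₊ ≤ d := by omega
      exact_mod_cast this
    have h2 : (2*(m:ℝ)+4)/ε ≤ d := le_trans (Nat.le_ceil _) h1
    rw [div_le_iff₀ hε] at h2; linarith
  have hdL : L^2 ≤ (ε/8)^2 * d := by
    have h1 : (⌈L^2/(ε/8)^2⌉₊ : ℝ) ≤ d := by
      have : ⌈L^2/(ε/8)^2⌉₊ ≤ d := by omega
      exact_mod_cast this
    have h2 : L^2/(ε/8)^2 ≤ d := le_trans (Nat.le_ceil _) h1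
    rw [div_le_iff₀ (by positivity)] at h2; linarith
  have hHz : (d:ℝ) * (1 - α + ε) ≤ ∑ i, binEnt (z i) := by
    have h2 := mul_le_mul_of_nonneg_left hH (le_of_lt hdpos)
    rw [← mul_assoc, mul_one_div, div_self (ne_of_gt hdpos), one_mul] at h2
    linarith
  -- the favorable corner and coordinate classes
  set f : Fin d → ℝ := fun i => if a i < 0 then 1 else 0 with hfdef
  have hf01 : ∀ i, f i = 0 ∨ f i = 1 := by
    intro i; by_cases h : a i < 0 <;> simp [hfdef, h]
  set Bal : Finset (Fin d) := Finset.univ.filter (fun i => δ ≤ z i ∧ z i ≤ 1 - δ) with hBaldef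
  obtain ⟨T, hTsub, hTcard, hTtop⟩ := exists_top (fun i => |a i|) m Bal
  set R : Finset (Fin d) := Bal \ T with hRdef
  set w : Fin d → ℝ := fun i => if i ∈ R then (1-θ)*z i + θ*f i else f i with hwdef
  have hzBal : ∀ i ∈ R, δ ≤ z i ∧ z i ≤ 1 - δ := by
    intro i hi
    have := Finset.mem_sdiff.1 hi
    exact (Finset.mem_filter.1 this.1).2
  have hf0 : ∀ i, (0:ℝ) ≤ f i := by
    intro i; rcases hf01 i with h | h <;> rw [h] <;> norm_num
  have hf1 : ∀ i, f i ≤ 1 := by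
    intro i; rcases hf01 i with h | h <;> rw [h] <;> norm_num
  have hwif : ∀ i, w i = if i ∈ R then (1-θ)*z i + θ*f i else f i := fun i => rfl
  have hw0 : ∀ i, 0 ≤ w i := by
    intro i
    rw [hwif i]
    by_cases hiR : i ∈ R
    · rw [if_pos hiR]
      have h2 := hzBal i hiR
      nlinarith [h2.1, h2.2, hf0 i]
    · rw [if_neg hiR]; exact hf0 i
  have hw1 : ∀ i, w i ≤ 1 := by
    intro i
    rw [hwif i]
    by_cases hiR : i ∈ R
    · rw [if_pos hiR]
      have h2 := hzBal i hiR
      nlinarith [h2.1, h2.2, hf1 i]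
    · rw [if_neg hiR]; exact hf1 i
  have hwR : ∀ i ∈ R, δ/2 ≤ w i ∧ w i ≤ 1 - δ/2 := by
    intro i hi
    have h2 := hzBal i hi
    rw [hwif i, if_pos hi]
    rcases hf01 i with h | h <;> rw [h] <;> constructor <;> nlinarith [h2.1, h2.2]
  set AT : ℝ := ∑ i ∈ T, |a i| with hATdef
  set AR : ℝ := ∑ i ∈ R, |a i| with hARdef
  have hAT0 : 0 ≤ AT := Finset.sum_nonneg fun i _ => abs_nonneg _
  have hAR0 : 0 ≤ AR := Finset.sum_nonneg fun i _ => abs_nonneg _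
  set g : ℝ := δ*AT + θ*δ*AR with hgdef
  have hg0 : 0 ≤ g := by positivity
  have hTR : ∀ i, i ∈ T → i ∉ R := by
    intro i hi hR'
    exact (Finset.mem_sdiff.1 hR').2 hi
  -- mean bound
  have hmean : (∑ i, a i * w i) + g ≤ c := by
    have key : ∀ i, a i * w i + ((if i ∈ T then δ*|a i| else 0) + (if i ∈ R then θ*δ*|a i| else 0))
        ≤ a i * z i := by
      intro i
      by_cases hiT : i ∈ T
      · have hiR : i ∉ R := fun h => (Finset.mem_sdiff.1 h).2 hiT
        have hiBal := hTsub hiT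
        have hzi := (Finset.mem_filter.1 hiBal).2
        rw [hwif i, if_neg hiR, if_pos hiT, if_neg hiR]
        rcases lt_or_ge (a i) 0 with ha | ha
        · have hfi : f i = 1 := if_pos ha
          rw [hfi, abs_of_neg ha]
          nlinarith [mul_nonneg (by linarith : (0:ℝ) ≤ -a i)
            (by linarith [hzi.2] : (0:ℝ) ≤ 1 - δ - z i)]
        · have hfi : f i = 0 := if_neg (not_lt.2 ha)
          rw [hfi, abs_of_nonneg ha]
          nlinarith [mul_nonneg ha (by linarith [hzi.1] : (0:ℝ) ≤ z i - δ)]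
      · by_cases hiR : i ∈ R
        · have hzi := hzBal i hiR
          rw [hwif i, if_pos hiR, if_neg hiT, if_pos hiR]
          rcases lt_or_ge (a i) 0 with ha | ha
          · have hfi : f i = 1 := if_pos ha
            rw [hfi, abs_of_neg ha]
            nlinarith [mul_nonneg (mul_nonneg hθ0.le (by linarith : (0:ℝ) ≤ -a i))
              (by linarith [hzi.2] : (0:ℝ) ≤ 1 - δ - z i)]
          · have hfi : f i = 0 := if_neg (not_lt.2 ha)
            rw [hfi, abs_of_nonneg ha]
            nlinarith [mul_nonneg (mul_nonneg hθ0.le ha)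
              (by linarith [hzi.1] : (0:ℝ) ≤ z i - δ)]
        · have hzi := hz i
          rw [hwif i, if_neg hiR, if_neg hiT, if_neg hiR]
          rcases lt_or_ge (a i) 0 with ha | ha
          · have hfi : f i = 1 := if_pos ha
            rw [hfi]
            nlinarith [mul_nonneg (by linarith : (0:ℝ) ≤ -a i)
              (by linarith [hzi.2] : (0:ℝ) ≤ 1 - z i)]
          · have hfi : f i = 0 := if_neg (not_lt.2 ha)
            rw [hfi]
            nlinarith [mul_nonneg ha (hzi.1.le)]
    have hsum := Finset.sum_le_sum (fun i (_ : i ∈ Finset.univ) => key i)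
    rw [Finset.sum_add_distrib, Finset.sum_add_distrib] at hsum
    have e1 : ∑ i, (if i ∈ T then δ*|a i| else 0) = δ * AT := by
      rw [Fintype.sum_ite_mem, hATdef, Finset.mul_sum]
    have e2 : ∑ i, (if i ∈ R then θ*δ*|a i| else 0) = θ*δ*AR := by
      rw [Fintype.sum_ite_mem, hARdef, Finset.mul_sum]
    rw [e1, e2] at hsum
    rw [hgdef]
    linarith
  -- variance of S bound
  have hTm : ∀ i ∈ R, (m:ℝ) * |a i| ≤ AT := by
    intro i hi
    obtain ⟨hiBal, hiT⟩ := Finset.mem_sdiff.1 hi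
    have hTcard' : T.card = m := by
      rcases Nat.lt_or_ge Bal.card m with h | h
      · exfalso
        have hle : Bal.card ≤ T.card := by omega
        have : T = Bal := Finset.eq_of_subset_of_card_le hTsub hle
        exact hiT (this ▸ hiBal)
      · rw [hTcard]; omega
    calc (m:ℝ)*|a i| = ∑ _j ∈ T, |a i| := by
          rw [Finset.sum_const, hTcard', nsmul_eq_mul]
      _ ≤ ∑ j ∈ T, |a j| := Finset.sum_le_sum (fun j hj => hTtop i hiBal hiT j hj)
  have hvar_le : ∑ i, a i ^ 2 * (w i * (1 - w i)) ≤ g^2/2 := by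
    have hzero : ∀ i ∈ Finset.univ, i ∉ R → a i ^2 * (w i * (1-w i)) = 0 := by
      intro i _ hiR
      rw [hwif i, if_neg hiR]
      rcases hf01 i with h | h <;> rw [h] <;> ring
    have hRsum : ∑ i, a i ^2 * (w i * (1-w i)) = ∑ i ∈ R, a i^2*(w i*(1-w i)) :=
      (Finset.sum_subset (Finset.subset_univ R) hzero).symm
    have hperR : ∀ i ∈ R, a i^2 * (w i * (1-w i)) ≤ AT * |a i| / (4*m) := by
      intro i hi
      have h1 := hTm i hi
      have h2 : w i * (1 - w i) ≤ 1/4 := by nlinarith [sq_nonneg (w i - 1/2)]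
      have h3 : a i^2 = |a i| * |a i| := by rw [← sq_abs]; ring
      have h4 : (0:ℝ) ≤ |a i| := abs_nonneg _
      have h5 : a i^2 * (w i * (1-w i)) ≤ |a i| * |a i| / 4 := by
        rw [h3]; nlinarith [mul_nonneg h4 h4, hw0 i, hw1 i]
      have h6 : |a i| * |a i| / 4 ≤ AT * |a i| / (4*m) := by
        rw [div_le_div_iff₀ (by norm_num) (by positivity)]
        nlinarith [mul_le_mul_of_nonneg_right h1 h4]
      linarith
    calc ∑ i, a i^2*(w i*(1-w i)) = ∑ i ∈ R, a i^2*(w i*(1-w i)) := hRsum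
      _ ≤ ∑ i ∈ R, AT * |a i|/(4*m) := Finset.sum_le_sum hperR
      _ = AT * AR / (4*m) := by rw [← Finset.sum_div, ← Finset.mul_sum, hARdef]
      _ ≤ g^2/2 := by
        have hABn : (0:ℝ) ≤ AT*AR := mul_nonneg hAT0 hAR0
        have hmge' : (1:ℝ) ≤ 8*θ*δ^2*m := by
          rw [div_le_iff₀ (by positivity)] at hmge
          nlinarith [hmge]
        have hAMGM : 4*(δ*AT)*(θ*δ*AR) ≤ g^2 := by
          rw [hgdef]; nlinarith [sq_nonneg (δ*AT - θ*δ*AR)]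
        rw [div_le_div_iff₀ (by positivity) (by norm_num)]
        have k1 : (2:ℝ)*(AT*AR) ≤ 16*θ*δ^2*(m:ℝ)*(AT*AR) := by nlinarith [hABn, hmge']
        have k2 : 16*θ*δ^2*(m:ℝ)*(AT*AR) ≤ (4*(m:ℝ))*g^2 := by nlinarith [hAMGM, hm0.le]
        nlinarith [k1, k2]
  -- Chebyshev for S
  set S : (Fin d → Bool) → ℝ := fun x => ∑ i, a i * (if x i then (1:ℝ) else 0) with hSdef
  set ES : ℝ := ∑ i, a i * w i with hESdef
  set Φ : Fin d → Bool → ℝ := fun i b => a i * ((if b then (1:ℝ) else 0) - w i) with hΦdef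
  have hΦmean : ∀ i, (1 - w i) * Φ i false + w i * Φ i true = 0 := by
    intro i; simp only [hΦdef, Bool.false_eq_true, if_false, if_true]; ring
  have hvarS := var_sum w Φ hΦmean
  have hSx : ∀ x, (∑ i, Φ i (x i)) = S x - ES := by
    intro x
    rw [hSdef, hESdef, ← Finset.sum_sub_distrib]
    exact Finset.sum_congr rfl fun i _ => by simp only [hΦdef]; ring
  have hvarS2 : ∑ x, mea w x * (S x - ES)^2 ≤ g^2/2 := by
    have e : ∑ x, mea w x * (S x - ES)^2 = ∑ i, ((1-w i)*(Φ i false)^2 + w i*(Φ i true)^2) := by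
      rw [← hvarS]
      exact Finset.sum_congr rfl fun x _ => by rw [hSx x]
    rw [e]
    have e2 : ∑ i, ((1-w i)*(Φ i false)^2 + w i*(Φ i true)^2) = ∑ i, a i^2*(w i*(1-w i)) :=
      Finset.sum_congr rfl fun i _ => by
        simp only [hΦdef, Bool.false_eq_true, if_false, if_true]; ring
    rw [e2]; exact hvar_le
  have hbad1 : ∑ x ∈ Finset.univ.filter (fun x => c < S x), mea w x ≤ 1/2 := by
    have := cheb (mea w) (fun x => S x - ES) (mea_nonneg hw0 hw1) g (g^2/2) 2 hg0 two_pos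
      hvarS2 (by nlinarith only [sq_nonneg g]) (Finset.univ.filter (fun x => c < S x))
      (by intro x hx
          have hcx := (Finset.mem_filter.1 hx).2
          show g < S x - ES
          linarith only [hmean, hcx])
    linarith only [this]
  -- Chebyshev for V
  set vv : Fin d → Bool → ℝ := fun i b => Real.logb 2 (br (w i) b)⁻¹ with hvvdef
  set V : (Fin d → Bool) → ℝ := fun x => ∑ i, vv i (x i) with hVdef
  set G : ℝ := ∑ i, binEnt (w i) with hGdef
  set Φ₂ : Fin d → Bool → ℝ := fun i b => vv i b - binEnt (w i) with hΦ₂def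
  have hEV : ∀ i, (1 - w i) * vv i false + w i * vv i true = binEnt (w i) := by
    intro i
    simp only [hvvdef, br, Bool.false_eq_true, if_false, if_true]
    rw [binEnt]; ring
  have hΦ₂mean : ∀ i, (1-w i)*Φ₂ i false + w i * Φ₂ i true = 0 := by
    intro i
    have h := hEV i
    simp only [hΦ₂def]
    linear_combination h
  have hvarV := var_sum w Φ₂ hΦ₂mean
  have hVx : ∀ x, (∑ i, Φ₂ i (x i)) = V x - G := by
    intro x
    rw [hVdef, hGdef, ← Finset.sum_sub_distrib]
  have hbound : ∀ i, (1-w i)*(Φ₂ i false)^2 + w i*(Φ₂ i true)^2 ≤ L^2/4 := by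
    intro i
    by_cases hiR : i ∈ R
    · obtain ⟨hwa, hwb⟩ := hwR i hiR
      have hwpos : 0 < w i := by linarith
      have hw1' : w i < 1 := by linarith
      have h1w : 0 < 1 - w i := by linarith
      have hinvT : 1 ≤ (w i)⁻¹ := by
        rw [← one_div, le_div_iff₀ hwpos]; linarith
      have hinvT2 : (w i)⁻¹ ≤ 2/δ := by
        rw [← one_div, div_le_div_iff₀ hwpos hδ0]; linarith
      have hinvF : 1 ≤ (1 - w i)⁻¹ := by
        rw [← one_div, le_div_iff₀ h1w]; linarith
      have hinvF2 : (1 - w i)⁻¹ ≤ 2/δ := by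
        rw [← one_div, div_le_div_iff₀ h1w hδ0]; linarith
      have hbrT : br (w i) true = w i := rfl
      have hbrF : br (w i) false = 1 - w i := rfl
      have hvvT : vv i true = Real.logb 2 (w i)⁻¹ := rfl
      have hvvF : vv i false = Real.logb 2 (1 - w i)⁻¹ := rfl
      have hvT0 : 0 ≤ vv i true := by
        rw [hvvT]; exact Real.logb_nonneg one_lt_two hinvT
      have hvT1 : vv i true ≤ L := by
        rw [hvvT, hLdef]
        exact Real.logb_le_logb_of_le one_lt_two (by positivity) hinvT2
      have hvF0 : 0 ≤ vv i false := by
        rw [hvvF]; exact Real.logb_nonneg one_lt_two hinvF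
      have hvF1 : vv i false ≤ L := by
        rw [hvvF, hLdef]
        exact Real.logb_le_logb_of_le one_lt_two (by positivity) hinvF2
      have hE : binEnt (w i) = (1-w i)*vv i false + w i * vv i true := (hEV i).symm
      have hid : (1-w i)*(Φ₂ i false)^2 + w i*(Φ₂ i true)^2
          = w i * (1-w i) * (vv i true - vv i false)^2 := by
        simp only [hΦ₂def]; rw [hE]; ring
      rw [hid]
      have hΔ : (vv i true - vv i false)^2 ≤ L^2 := by nlinarith only [hvT0, hvT1, hvF0, hvF1]
      have hwq : w i*(1-w i) ≤ 1/4 := by nlinarith only [sq_nonneg (w i - 1/2)]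
      nlinarith only [sq_nonneg (vv i true - vv i false), mul_nonneg hwpos.le h1w.le, hΔ, hwq, hL0]
    · have hwf : w i = f i := by rw [hwif i, if_neg hiR]
      have hL2 : (0:ℝ) ≤ L^2/4 := by positivity
      rcases hf01 i with h | h
      · have hw00 : w i = 0 := hwf.trans h
        have e : (1-w i)*(Φ₂ i false)^2 + w i*(Φ₂ i true)^2 = 0 := by
          simp [hΦ₂def, hvvdef, br, hw00, binEnt_zero]
        rw [e]; exact hL2
      · have hw11 : w i = 1 := hwf.trans h
        have e : (1-w i)*(Φ₂ i false)^2 + w i*(Φ₂ i true)^2 = 0 := by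
          simp [hΦ₂def, hvvdef, br, hw11, binEnt_one]
        rw [e]; exact hL2
  have hQ2 : ∑ x, mea w x * (G - V x)^2 ≤ (d:ℝ)*L^2/4 := by
    have e : ∑ x, mea w x * (G - V x)^2 = ∑ i, ((1-w i)*(Φ₂ i false)^2 + w i*(Φ₂ i true)^2) := by
      rw [← hvarV]
      refine Finset.sum_congr rfl fun x _ => ?_
      rw [hVx x]; ring_nf
    rw [e]
    calc ∑ i, ((1-w i)*(Φ₂ i false)^2 + w i*(Φ₂ i true)^2) ≤ ∑ _i : Fin d, L^2/4 :=
          Finset.sum_le_sum fun i _ => hbound i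
      _ = (d:ℝ)*L^2/4 := by
          rw [Finset.sum_const, Finset.card_univ, Fintype.card_fin, nsmul_eq_mul]; ring
  have hbad2 : ∑ x ∈ Finset.univ.filter (fun x => V x < G - (ε/8)*d), mea w x ≤ 1/4 := by
    have h4Q : 4*((d:ℝ)*L^2/4) ≤ ((ε/8)*d)^2 := by nlinarith only [hdL, hdpos, mul_le_mul_of_nonneg_right hdL hdpos.le]
    have := cheb (mea w) (fun x => G - V x) (mea_nonneg hw0 hw1) ((ε/8)*d) ((d:ℝ)*L^2/4) 4
      (by positivity) (by norm_num) hQ2 h4Q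
      (Finset.univ.filter (fun x => V x < G - (ε/8)*d))
      (by intro x hx
          have hcx := (Finset.mem_filter.1 hx).2
          show (ε/8)*d < G - V x
          linarith only [hcx])
    linarith only [this]
  -- the good set
  set β : ℝ := G - (ε/8)*d with hβdef
  set good : Finset (Fin d → Bool) :=
    Finset.univ.filter (fun x => S x ≤ c ∧ β ≤ V x) with hgooddef
  have hgood : 1/4 ≤ ∑ x ∈ good, mea w x := by
    set bad1 := Finset.univ.filter (fun x => c < S x) with hbad1def
    set bad2 := Finset.univ.filter (fun x => V x < β) with hbad2def
    have hcover : (Finset.univ : Finset (Fin d → Bool)) ⊆ bad1 ∪ (bad2 ∪ good) := by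
      intro x _
      simp only [hbad1def, hbad2def, hgooddef, Finset.mem_union, Finset.mem_filter,
        Finset.mem_univ, true_and]
      by_cases h1 : S x ≤ c
      · by_cases h2 : β ≤ V x
        · exact Or.inr (Or.inr ⟨h1, h2⟩)
        · exact Or.inr (Or.inl (lt_of_not_ge h2))
      · exact Or.inl (lt_of_not_ge h1)
    have h1 : (1:ℝ) ≤ ∑ x ∈ bad1 ∪ (bad2 ∪ good), mea w x := by
      rw [show (1:ℝ) = ∑ x, mea w x from (sum_mea w).symm]
      exact Finset.sum_le_sum_of_subset_of_nonneg hcover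
        (fun x _ _ => mea_nonneg hw0 hw1 x)
    have h2 : ∑ x ∈ bad1 ∪ (bad2 ∪ good), mea w x
        ≤ ∑ x ∈ bad1, mea w x + (∑ x ∈ bad2, mea w x + ∑ x ∈ good, mea w x) := by
      refine le_trans (sum_union_le _ _ _ (mea_nonneg hw0 hw1)) ?_
      have := sum_union_le bad2 good (mea w) (mea_nonneg hw0 hw1)
      linarith
    linarith only [h1, h2, hbad1, hbad2]
  have hcard : (1/4 : ℝ) ≤ (good.card : ℝ) * (2:ℝ) ^ (-β) := by
    have hM : ∀ x ∈ good, mea w x ≤ (2:ℝ)^(-β) := by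
      intro x hx
      have h2 := (Finset.mem_filter.1 hx).2.2
      exact mea_le_rpow w hw0 hw1 x β h2
    have := Finset.sum_le_card_nsmul good (mea w) _ hM
    rw [nsmul_eq_mul] at this
    linarith only [hgood, this]
  have hgoodcard : (2:ℝ)^(β - 2) ≤ (good.card : ℝ) := by
    have key : (2:ℝ)^(-β) * (2:ℝ)^β = 1 := by
      rw [← Real.rpow_add two_pos]; simp
    have h2two : (2:ℝ)^(2:ℝ) = 4 := by
      rw [show (2:ℝ) = ((2:ℕ):ℝ) by norm_num]
      rw [Real.rpow_natCast]; norm_num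
    have hsplit : (2:ℝ)^(β-2) = (2:ℝ)^β * (1/4) := by
      rw [Real.rpow_sub two_pos, h2two]; ring
    have hβpos : (0:ℝ) ≤ (2:ℝ)^β := le_of_lt (Real.rpow_pos_of_pos two_pos _)
    calc (2:ℝ)^(β-2) = (2:ℝ)^β * (1/4) := hsplit
      _ ≤ (2:ℝ)^β * ((good.card : ℝ) * (2:ℝ)^(-β)) :=
          mul_le_mul_of_nonneg_left hcard hβpos
      _ = (good.card : ℝ) * ((2:ℝ)^(-β) * (2:ℝ)^β) := by ring
      _ = (good.card : ℝ) := by rw [key, mul_one]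
  -- entropy lower bound on β
  have hβge : (1-α)*(d:ℝ) + 2 ≤ β := by
    have hzIcc : ∀ i, z i ∈ Set.Icc (0:ℝ) 1 := fun i => ⟨(hz i).1.le, (hz i).2.le⟩
    have hfIcc : ∀ i, f i ∈ Set.Icc (0:ℝ) 1 := by
      intro i; rcases hf01 i with h | h <;> rw [h] <;> constructor <;> norm_num
    have hconc : ∀ i ∈ R, (1-θ)*binEnt (z i) ≤ binEnt (w i) := by
      intro i hi
      have hfz : binEnt (f i) = 0 := by
        rcases hf01 i with h | h <;> rw [h]
        · exact binEnt_zero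
        · exact binEnt_one
      have hcc := binEnt_concave.2 (hzIcc i) (hfIcc i) (by linarith : (0:ℝ) ≤ 1-θ)
        hθ0.le (by ring)
      rw [hwif i, if_pos hi]
      simpa [smul_eq_mul, hfz] using hcc
    have hsumRle : ∑ i ∈ R, binEnt (z i) ≤ (d:ℝ) := by
      calc ∑ i ∈ R, binEnt (z i) ≤ ∑ _i ∈ R, (1:ℝ) :=
            Finset.sum_le_sum fun i _ => binEnt_le_one _
        _ = R.card := by rw [Finset.sum_const, nsmul_eq_mul, mul_one]
        _ ≤ (d:ℝ) := by
            have h := Finset.card_le_univ R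
            rw [Fintype.card_fin] at h
            exact_mod_cast h
    have hcompl : ∑ i ∈ Finset.univ \ R, binEnt (z i) ≤ (m:ℝ) + (ε/4)*d := by
      have hper : ∀ i ∈ Finset.univ \ R, binEnt (z i) ≤ (if i ∈ T then (1:ℝ) else 0) + ε/4 := by
        intro i hi
        have hiR : i ∉ R := (Finset.mem_sdiff.1 hi).2
        by_cases hiT : i ∈ T
        · rw [if_pos hiT]; linarith [binEnt_le_one (z i), hε]
        · rw [if_neg hiT]
          have hiBal : i ∉ Bal := fun h => hiR (Finset.mem_sdiff.2 ⟨h, hiT⟩)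
          have hnot : ¬(δ ≤ z i ∧ z i ≤ 1 - δ) := fun h =>
            hiBal (Finset.mem_filter.2 ⟨Finset.mem_univ _, h⟩)
          have hz' := hz i
          rcases lt_or_ge (z i) δ with h | h
          · have := hδ (z i) hz'.1.le hz'.2.le (Or.inl h); linarith
          · have h2 : 1 - δ < z i := by
              by_contra hle
              push_neg at hle
              exact hnot ⟨h, hle⟩
            have := hδ (z i) hz'.1.le hz'.2.le (Or.inr h2); linarith
      have e1 : ∑ i ∈ Finset.univ \ R, (if i ∈ T then (1:ℝ) else 0)
          = (((Finset.univ \ R) ∩ T).card : ℝ) := by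
        rw [Finset.sum_ite_mem, Finset.sum_const, nsmul_eq_mul, mul_one]
      have e2 : (Finset.univ \ R) ∩ T = T :=
        Finset.inter_eq_right.2 (fun j hj =>
          Finset.mem_sdiff.2 ⟨Finset.mem_univ _, hTR j hj⟩)
      have hTm' : (T.card:ℝ) ≤ (m:ℝ) := by
        have : T.card ≤ m := by rw [hTcard]; omega
        exact_mod_cast this
      have hcard' : (((Finset.univ \ R) : Finset (Fin d)).card : ℝ) ≤ (d:ℝ) := by
        have h := Finset.card_le_univ (Finset.univ \ R)
        rw [Fintype.card_fin] at h
        exact_mod_cast h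
      calc ∑ i ∈ Finset.univ \ R, binEnt (z i)
          ≤ ∑ i ∈ Finset.univ \ R, ((if i ∈ T then (1:ℝ) else 0) + ε/4) :=
            Finset.sum_le_sum hper
        _ = (((Finset.univ \ R) ∩ T).card : ℝ) + ((Finset.univ \ R).card : ℝ) * (ε/4) := by
            rw [Finset.sum_add_distrib, e1, Finset.sum_const, nsmul_eq_mul]
        _ ≤ (m:ℝ) + (ε/4)*d := by
            rw [e2]
            have : ((Finset.univ \ R).card : ℝ) * (ε/4) ≤ (d:ℝ) * (ε/4) :=
              mul_le_mul_of_nonneg_right hcard' (by positivity)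
            linarith
    have hsplit : ∑ i ∈ Finset.univ \ R, binEnt (z i) + ∑ i ∈ R, binEnt (z i)
        = ∑ i, binEnt (z i) := Finset.sum_sdiff (Finset.subset_univ R)
    have hGge : ∑ i ∈ R, binEnt (z i) - θ*d ≤ G := by
      have h1 : ∑ i ∈ R, binEnt (w i) ≤ G := by
        rw [hGdef]
        exact Finset.sum_le_sum_of_subset_of_nonneg (Finset.subset_univ R)
          (fun i _ _ => binEnt_nonneg (hw0 i) (hw1 i))
      have h2 : (1-θ) * ∑ i ∈ R, binEnt (z i) ≤ ∑ i ∈ R, binEnt (w i) := by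
        rw [Finset.mul_sum]
        exact Finset.sum_le_sum fun i hi => hconc i hi
      have h3 : 0 ≤ ∑ i ∈ R, binEnt (z i) :=
        Finset.sum_nonneg fun i _ => binEnt_nonneg (hz i).1.le (hz i).2.le
      nlinarith only [h1, h2, h3, hsumRle,
        mul_nonneg hθ0.le (sub_nonneg.2 hsumRle)]
    have hθd : θ*(d:ℝ) ≤ (ε/8)*d := mul_le_mul_of_nonneg_right hθε hdpos.le
    rw [hβdef]
    linarith only [hGge, hcompl, hsplit, hHz, hdm, hθd]
  -- finish
  have hsubset : good ⊆ Finset.univ.filter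
      (fun x : Fin d → Bool => (∑ i, a i * (if x i then (1:ℝ) else 0)) ≤ c) := by
    intro x hx
    have := (Finset.mem_filter.1 hx).2
    exact Finset.mem_filter.2 ⟨Finset.mem_univ _, this.1⟩
  calc (2:ℝ) ^ ((1 - α) * (d:ℝ)) ≤ (2:ℝ) ^ (β - 2) := by
        apply Real.rpow_le_rpow_of_exponent_le one_le_two; linarith
    _ ≤ (good.card : ℝ) := hgoodcard
    _ ≤ _ := by exact_mod_cast Finset.card_le_card hsubset

end S8

/-- `2^d · p(z)`: the minimum number of cube vertices contained in a closed affine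
halfspace `{x | ∑ i, a i * x i ≤ c}` containing `z`. -/
noncomputable def minHalfCount (d : ℕ) (z : Fin d → ℝ) : ℕ :=
  sInf {m : ℕ | ∃ (a : Fin d → ℝ) (c : ℝ), (∑ i, a i * z i) ≤ c ∧
    m = {x : Fin d → Bool | (∑ i, a i * bv x i) ≤ c}.ncard}

/-- `[0,1]^d_α = {z ∈ [0,1]^d : p(z) ≥ 2^{-αd}}`. -/
noncomputable def cubeAlpha (d : ℕ) (α : ℝ) : Set (Fin d → ℝ) :=
  {z | (∀ i, z i ∈ Set.Icc (0 : ℝ) 1) ∧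
    (2 : ℝ) ^ (-(α * (d : ℝ))) ≤ (2 : ℝ) ^ (-(d : ℝ)) * (minHalfCount d z : ℝ)}

/-- For large `d`, every `z` in the open cube with `H(z) ≥ 1 - α + ε` lies in
`[0,1]^d_α`; equivalently, every closed affine halfspace containing such a `z`
contains at least `2^{(1-α)d}` cube vertices. -/
theorem stmt8 (α ε : ℝ) (hα : 0 < α) (hε : 0 < ε) :
    ∃ d₀ : ℕ, ∀ d : ℕ, d₀ ≤ d →
      ({z : Fin d → ℝ | (∀ i, z i ∈ Set.Ioo (0 : ℝ) 1) ∧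
          1 - α + ε ≤ (1 / (d : ℝ)) * ∑ i, binEnt (z i)} ⊆ cubeAlpha d α) ∧
      (∀ z : Fin d → ℝ, (∀ i, z i ∈ Set.Ioo (0 : ℝ) 1) →
        1 - α + ε ≤ (1 / (d : ℝ)) * ∑ i, binEnt (z i) →
        ∀ (a : Fin d → ℝ) (c : ℝ), (∑ i, a i * z i) ≤ c →
          (2 : ℝ) ^ ((1 - α) * (d : ℝ)) ≤
            ({x : Fin d → Bool | (∑ i, a i * bv x i) ≤ c}.ncard : ℝ)) := by
  classical
  obtain ⟨d₀, hd₀1, hmain⟩ := S8.main_count α ε hε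
  refine ⟨d₀, fun d hd => ?_⟩
  have hncard : ∀ (a : Fin d → ℝ) (c : ℝ),
      ({x : Fin d → Bool | (∑ i, a i * bv x i) ≤ c}.ncard : ℕ)
      = (Finset.univ.filter
          (fun x : Fin d → Bool => (∑ i, a i * (if x i then (1:ℝ) else 0)) ≤ c)).card := by
    intro a c
    rw [← Set.ncard_coe_finset]
    congr 1
    ext x
    simp [bv]
  have hbullet2 : ∀ z : Fin d → ℝ, (∀ i, z i ∈ Set.Ioo (0:ℝ) 1) →
      1 - α + ε ≤ (1 / (d : ℝ)) * ∑ i, binEnt (z i) →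
      ∀ (a : Fin d → ℝ) (c : ℝ), (∑ i, a i * z i) ≤ c →
        (2:ℝ) ^ ((1 - α) * (d:ℝ)) ≤
          ({x : Fin d → Bool | (∑ i, a i * bv x i) ≤ c}.ncard : ℝ) := by
    intro z hz hH a c hc
    rw [hncard a c]
    exact hmain d hd z a c hz hH hc
  refine ⟨?_, hbullet2⟩
  intro z hzmem
  obtain ⟨hz, hH⟩ := hzmem
  refine ⟨fun i => ⟨(hz i).1.le, (hz i).2.le⟩, ?_⟩
  have hlow : ∀ n ∈ {m : ℕ | ∃ (a : Fin d → ℝ) (c : ℝ), (∑ i, a i * z i) ≤ c ∧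
      m = {x : Fin d → Bool | (∑ i, a i * bv x i) ≤ c}.ncard},
      (2:ℝ)^((1-α)*(d:ℝ)) ≤ (n:ℝ) := by
    rintro n ⟨a, c, hc, rfl⟩
    exact hbullet2 z hz hH a c hc
  have hne : {m : ℕ | ∃ (a : Fin d → ℝ) (c : ℝ), (∑ i, a i * z i) ≤ c ∧
      m = {x : Fin d → Bool | (∑ i, a i * bv x i) ≤ c}.ncard}.Nonempty := by
    refine ⟨{x : Fin d → Bool | (∑ i, (fun _ => (0:ℝ)) i * bv x i) ≤ 0}.ncard,
      (fun _ => (0:ℝ)), 0, by simp, rfl⟩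
  have hmem := Nat.sInf_mem hne
  have h1 : (2:ℝ)^((1-α)*(d:ℝ)) ≤ (minHalfCount d z : ℝ) := hlow _ hmem
  have h2 : (2:ℝ)^(-(α*(d:ℝ))) = (2:ℝ)^(-(d:ℝ)) * (2:ℝ)^((1-α)*(d:ℝ)) := by
    rw [← Real.rpow_add two_pos]
    congr 1
    ring
  rw [h2]
  exact mul_le_mul_of_nonneg_left h1 (le_of_lt (Real.rpow_pos_of_pos two_pos _))
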